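/- For all distinct positive real numbers a and b, G(a,b)·I(a,b)/L(a,b) < √(I(a,b)·G(a,b)) < L(I(a,b), G(a,b)) < L(a,b). -/

import Mathlib

open Real Filter Set

lemma hd_mono (a : ℝ) (i j l : ℕ) (x : ℝ) :
    HasDerivAt (fun t : ℝ => a * (t ^ i * Real.sinh t ^ j * Real.cosh t ^ l))
      (a * ((↑i * x ^ (i-1) * Real.sinh x ^ j + x ^ i * (↑j * Real.sinh x ^ (j-1) * Real.cosh x)) * Real.cosh x ^ l
        + x ^ i * Real.sinh x ^ j * (↑l * Real.cosh x ^ (l-1) * Real.sinh x))) x := by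
  have hs : HasDerivAt Real.sinh (Real.cosh x) x := by simpa using (hasDerivAt_id x).sinh
  have hc : HasDerivAt Real.cosh (Real.sinh x) x := by simpa using (hasDerivAt_id x).cosh
  exact (((hasDerivAt_pow i x).mul (hs.pow j)).mul (hc.pow l)).const_mul a

lemma cascade {f f' : ℝ → ℝ} (hd : ∀ x, HasDerivAt f (f' x) x) (h0 : f 0 = 0)
    (hp : ∀ x, 0 < x → 0 < f' x) : ∀ x, 0 < x → 0 < f x := by
  intro x hx
  have hmono : StrictMonoOn f (Set.Ici 0) := by
    apply strictMonoOn_of_deriv_pos (convex_Ici 0)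
    · exact fun t _ => (hd t).continuousAt.continuousWithinAt
    · intro t ht
      rw [interior_Ici] at ht
      rw [(hd t).deriv]
      exact hp t ht
  calc (0:ℝ) = f 0 := h0.symm
  _ < f x := hmono Set.self_mem_Ici (Set.mem_Ici.2 hx.le) hx

-- B : x cosh x - sinh x > 0
lemma Bpos : ∀ x : ℝ, 0 < x → 0 < x * Real.cosh x - Real.sinh x := by
  have hd : ∀ x : ℝ, HasDerivAt (fun t : ℝ => 1 * (t ^ 1 * Real.sinh t ^ 0 * Real.cosh t ^ 1) + (-1) * (t ^ 0 * Real.sinh t ^ 1 * Real.cosh t ^ 0))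
      (1 * (x ^ 1 * Real.sinh x ^ 1 * Real.cosh x ^ 0)) x := by
    intro x
    have h := (hd_mono 1 1 0 1 x).add (hd_mono (-1) 0 1 0 x)
    refine h.congr_deriv ?_
    first
    | (norm_num; ring)
    | norm_num
    | ring
  have h := cascade hd (by norm_num) (fun x hx => by
    have hs := Real.sinh_pos_iff.2 hx
    norm_num
    positivity)
  intro x hx
  have := h x hx
  nlinarith [this]
lemma hdQ0 : ∀ x : ℝ, HasDerivAt (fun t : ℝ => (1) * (t ^ 0 * Real.sinh t ^ 3 * Real.cosh t ^ 0) + (-2) * (t ^ 2 * Real.sinh t ^ 1 * Real.cosh t ^ 0) + (-1) * (t ^ 2 * Real.sinh t ^ 1 * Real.cosh t ^ 1) + (1) * (t ^ 3 * Real.sinh t ^ 0 * Real.cosh t ^ 0) + (1) * (t ^ 3 * Real.sinh t ^ 0 * Real.cosh t ^ 1))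
    ((3) * (x ^ 0 * Real.sinh x ^ 2 * Real.cosh x ^ 1) + (-4) * (x ^ 1 * Real.sinh x ^ 1 * Real.cosh x ^ 0) + (-2) * (x ^ 1 * Real.sinh x ^ 1 * Real.cosh x ^ 1) + (3) * (x ^ 2 * Real.sinh x ^ 0 * Real.cosh x ^ 0) + (1) * (x ^ 2 * Real.sinh x ^ 0 * Real.cosh x ^ 1) + (-1) * (x ^ 2 * Real.sinh x ^ 0 * Real.cosh x ^ 2) + (-1) * (x ^ 2 * Real.sinh x ^ 2 * Real.cosh x ^ 0) + (1) * (x ^ 3 * Real.sinh x ^ 1 * Real.cosh x ^ 0)) x := by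
  intro x
  have h := (((((hd_mono (1) 0 3 0 x).add (hd_mono (-2) 2 1 0 x)).add (hd_mono (-1) 2 1 1 x)).add (hd_mono (1) 3 0 0 x)).add (hd_mono (1) 3 0 1 x))
  refine h.congr_deriv ?_
  first
  | (norm_num; ring)
  | norm_num
  | ring

lemma hdQ1 : ∀ x : ℝ, HasDerivAt (fun t : ℝ => (3) * (t ^ 0 * Real.sinh t ^ 2 * Real.cosh t ^ 1) + (-4) * (t ^ 1 * Real.sinh t ^ 1 * Real.cosh t ^ 0) + (-2) * (t ^ 1 * Real.sinh t ^ 1 * Real.cosh t ^ 1) + (3) * (t ^ 2 * Real.sinh t ^ 0 * Real.cosh t ^ 0) + (1) * (t ^ 2 * Real.sinh t ^ 0 * Real.cosh t ^ 1) + (-1) * (t ^ 2 * Real.sinh t ^ 0 * Real.cosh t ^ 2) + (-1) * (t ^ 2 * Real.sinh t ^ 2 * Real.cosh t ^ 0) + (1) * (t ^ 3 * Real.sinh t ^ 1 * Real.cosh t ^ 0))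
    ((-4) * (x ^ 0 * Real.sinh x ^ 1 * Real.cosh x ^ 0) + (-2) * (x ^ 0 * Real.sinh x ^ 1 * Real.cosh x ^ 1) + (6) * (x ^ 0 * Real.sinh x ^ 1 * Real.cosh x ^ 2) + (3) * (x ^ 0 * Real.sinh x ^ 3 * Real.cosh x ^ 0) + (6) * (x ^ 1 * Real.sinh x ^ 0 * Real.cosh x ^ 0) + (-2) * (x ^ 1 * Real.sinh x ^ 0 * Real.cosh x ^ 1) + (-4) * (x ^ 1 * Real.sinh x ^ 0 * Real.cosh x ^ 2) + (-4) * (x ^ 1 * Real.sinh x ^ 2 * Real.cosh x ^ 0) + (4) * (x ^ 2 * Real.sinh x ^ 1 * Real.cosh x ^ 0) + (-4) * (x ^ 2 * Real.sinh x ^ 1 * Real.cosh x ^ 1) + (1) * (x ^ 3 * Real.sinh x ^ 0 * Real.cosh x ^ 1)) x := by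
  intro x
  have h := ((((((((hd_mono (3) 0 2 1 x).add (hd_mono (-4) 1 1 0 x)).add (hd_mono (-2) 1 1 1 x)).add (hd_mono (3) 2 0 0 x)).add (hd_mono (1) 2 0 1 x)).add (hd_mono (-1) 2 0 2 x)).add (hd_mono (-1) 2 2 0 x)).add (hd_mono (1) 3 1 0 x))
  refine h.congr_deriv ?_
  first
  | (norm_num; ring)
  | norm_num
  | ring

lemma hdQ2 : ∀ x : ℝ, HasDerivAt (fun t : ℝ => (-4) * (t ^ 0 * Real.sinh t ^ 1 * Real.cosh t ^ 0) + (-2) * (t ^ 0 * Real.sinh t ^ 1 * Real.cosh t ^ 1) + (6) * (t ^ 0 * Real.sinh t ^ 1 * Real.cosh t ^ 2) + (3) * (t ^ 0 * Real.sinh t ^ 3 * Real.cosh t ^ 0) + (6) * (t ^ 1 * Real.sinh t ^ 0 * Real.cosh t ^ 0) + (-2) * (t ^ 1 * Real.sinh t ^ 0 * Real.cosh t ^ 1) + (-4) * (t ^ 1 * Real.sinh t ^ 0 * Real.cosh t ^ 2) + (-4) * (t ^ 1 * Real.sinh t ^ 2 * Real.cosh t ^ 0) + (4) * (t ^ 2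 * Real.sinh t ^ 1 * Real.cosh t ^ 0) + (-4) * (t ^ 2 * Real.sinh t ^ 1 * Real.cosh t ^ 1) + (1) * (t ^ 3 * Real.sinh t ^ 0 * Real.cosh t ^ 1))
    ((6) * (x ^ 0 * Real.sinh x ^ 0 * Real.cosh x ^ 0) + (-6) * (x ^ 0 * Real.sinh x ^ 0 * Real.cosh x ^ 1) + (-6) * (x ^ 0 * Real.sinh x ^ 0 * Real.cosh x ^ 2) + (6) * (x ^ 0 * Real.sinh x ^ 0 * Real.cosh x ^ 3) + (-6) * (x ^ 0 * Real.sinh x ^ 2 * Real.cosh x ^ 0) + (21) * (x ^ 0 * Real.sinh x ^ 2 * Real.cosh x ^ 1) + (6) * (x ^ 1 * Real.sinh x ^ 1 * Real.cosh x ^ 0) + (-24) * (x ^ 1 * Real.sinh x ^ 1 * Real.cosh x ^ 1) + (7) * (x ^ 2 * Real.sinh x ^ 0 * Real.cosh x ^ 1) + (-4) * (x ^ 2 * Real.sinh x ^ 0 * Real.cosh x ^ 2) + (-4) * (x ^ 2 * Real.sinh x ^ 2 * Real.cosh x ^ 0) + (1) * (x ^ 3 * Real.sinh x ^ 1 * Real.cosh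 x ^ 0)) x := by
  intro x
  have h := (((((((((((hd_mono (-4) 0 1 0 x).add (hd_mono (-2) 0 1 1 x)).add (hd_mono (6) 0 1 2 x)).add (hd_mono (3) 0 3 0 x)).add (hd_mono (6) 1 0 0 x)).add (hd_mono (-2) 1 0 1 x)).add (hd_mono (-4) 1 0 2 x)).add (hd_mono (-4) 1 2 0 x)).add (hd_mono (4) 2 1 0 x)).add (hd_mono (-4) 2 1 1 x)).add (hd_mono (1) 3 0 1 x))
  refine h.congr_deriv ?_
  first
  | (norm_num; ring)
  | norm_num
  | ring

lemma hdQ3 : ∀ x : ℝ, HasDerivAt (fun t : ℝ => (6) * (t ^ 0 * Real.sinh t ^ 0 * Real.cosh t ^ 0) + (-6) * (t ^ 0 * Real.sinh t ^ 0 * Real.cosh t ^ 1) + (-6) * (t ^ 0 * Real.sinh t ^ 0 * Real.cosh t ^ 2) + (6) * (t ^ 0 * Real.sinh t ^ 0 * Real.cosh t ^ 3) + (-6) * (t ^ 0 * Real.sinh t ^ 2 * Real.cosh t ^ 0) + (21) * (t ^ 0 * Real.sinh t ^ 2 * Real.cosh t ^ 1) + (6) * (t ^ 1 * Real.sinh t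 ^ 1 * Real.cosh t ^ 0) + (-24) * (t ^ 1 * Real.sinh t ^ 1 * Real.cosh t ^ 1) + (7) * (t ^ 2 * Real.sinh t ^ 0 * Real.cosh t ^ 1) + (-4) * (t ^ 2 * Real.sinh t ^ 0 * Real.cosh t ^ 2) + (-4) * (t ^ 2 * Real.sinh t ^ 2 * Real.cosh t ^ 0) + (1) * (t ^ 3 * Real.sinh t ^ 1 * Real.cosh t ^ 0))
    ((-48) * (x ^ 0 * Real.sinh x ^ 1 * Real.cosh x ^ 1) + (60) * (x ^ 0 * Real.sinh x ^ 1 * Real.cosh x ^ 2) + (21) * (x ^ 0 * Real.sinh x ^ 3 * Real.cosh x ^ 0) + (20) * (x ^ 1 * Real.sinh x ^ 0 * Real.cosh x ^ 1) + (-32) * (x ^ 1 * Real.sinh x ^ 0 * Real.cosh x ^ 2) + (-32) * (x ^ 1 * Real.sinh x ^ 2 * Real.cosh x ^ 0) + (10) * (x ^ 2 * Real.sinh x ^ 1 * Real.cosh x ^ 0) + (-16) * (x ^ 2 * Real.sinh x ^ 1 * Real.cosh x ^ 1) + (1) * (x ^ 3 * Real.sinh x ^ 0 * Real.cosh x ^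 1)) x := by
  intro x
  have h := ((((((((((((hd_mono (6) 0 0 0 x).add (hd_mono (-6) 0 0 1 x)).add (hd_mono (-6) 0 0 2 x)).add (hd_mono (6) 0 0 3 x)).add (hd_mono (-6) 0 2 0 x)).add (hd_mono (21) 0 2 1 x)).add (hd_mono (6) 1 1 0 x)).add (hd_mono (-24) 1 1 1 x)).add (hd_mono (7) 2 0 1 x)).add (hd_mono (-4) 2 0 2 x)).add (hd_mono (-4) 2 2 0 x)).add (hd_mono (1) 3 1 0 x))
  refine h.congr_deriv ?_
  first
  | (norm_num; ring)
  | norm_num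
  | ring

lemma hdQ4 : ∀ x : ℝ, HasDerivAt (fun t : ℝ => (-48) * (t ^ 0 * Real.sinh t ^ 1 * Real.cosh t ^ 1) + (60) * (t ^ 0 * Real.sinh t ^ 1 * Real.cosh t ^ 2) + (21) * (t ^ 0 * Real.sinh t ^ 3 * Real.cosh t ^ 0) + (20) * (t ^ 1 * Real.sinh t ^ 0 * Real.cosh t ^ 1) + (-32) * (t ^ 1 * Real.sinh t ^ 0 * Real.cosh t ^ 2) + (-32) * (t ^ 1 * Real.sinh t ^ 2 * Real.cosh t ^ 0) + (10) * (t ^ 2 * Real.sinh t ^ 1 * Real.cosh t ^ 0) + (-16) * (t ^ 2 * Real.sinh t ^ 1 * Real.cosh t ^ 1) + (1) * (t ^ 3 * Real.sinh t ^ 0 * Real.cosh t ^ 1))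
    ((20) * (x ^ 0 * Real.sinh x ^ 0 * Real.cosh x ^ 1) + (-80) * (x ^ 0 * Real.sinh x ^ 0 * Real.cosh x ^ 2) + (60) * (x ^ 0 * Real.sinh x ^ 0 * Real.cosh x ^ 3) + (-80) * (x ^ 0 * Real.sinh x ^ 2 * Real.cosh x ^ 0) + (183) * (x ^ 0 * Real.sinh x ^ 2 * Real.cosh x ^ 1) + (40) * (x ^ 1 * Real.sinh x ^ 1 * Real.cosh x ^ 0) + (-160) * (x ^ 1 * Real.sinh x ^ 1 * Real.cosh x ^ 1) + (13) * (x ^ 2 * Real.sinh x ^ 0 * Real.cosh x ^ 1) + (-16) * (x ^ 2 * Real.sinh x ^ 0 * Real.cosh x ^ 2) + (-16) * (x ^ 2 * Real.sinh x ^ 2 * Real.cosh x ^ 0) + (1) * (x ^ 3 * Real.sinh x ^ 1 * Real.cosh x ^ 0)) x := by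
  intro x
  have h := (((((((((hd_mono (-48) 0 1 1 x).add (hd_mono (60) 0 1 2 x)).add (hd_mono (21) 0 3 0 x)).add (hd_mono (20) 1 0 1 x)).add (hd_mono (-32) 1 0 2 x)).add (hd_mono (-32) 1 2 0 x)).add (hd_mono (10) 2 1 0 x)).add (hd_mono (-16) 2 1 1 x)).add (hd_mono (1) 3 0 1 x))
  refine h.congr_deriv ?_
  first
  | (norm_num; ring)
  | norm_num
  | ring

lemma hdQ5 : ∀ x : ℝ, HasDerivAt (fun t : ℝ => (20) * (t ^ 0 * Real.sinh t ^ 0 * Real.cosh t ^ 1) + (-80) * (t ^ 0 * Real.sinh t ^ 0 * Real.cosh t ^ 2) + (60) * (t ^ 0 * Real.sinh t ^ 0 * Real.cosh t ^ 3) + (-80) * (t ^ 0 * Real.sinh t ^ 2 * Real.cosh t ^ 0) + (183) * (t ^ 0 * Real.sinh t ^ 2 * Real.cosh t ^ 1) + (40) * (t ^ 1 * Real.sinh t ^ 1 * Real.cosh t ^ 0) + (-160) * (t ^ 1 * Real.sinh t ^ 1 * Real.cosh t ^ 1) + (13) * (t ^ 2 * Real.sinh t ^ 0 * Real.cosh t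 ^ 1) + (-16) * (t ^ 2 * Real.sinh t ^ 0 * Real.cosh t ^ 2) + (-16) * (t ^ 2 * Real.sinh t ^ 2 * Real.cosh t ^ 0) + (1) * (t ^ 3 * Real.sinh t ^ 1 * Real.cosh t ^ 0))
    ((60) * (x ^ 0 * Real.sinh x ^ 1 * Real.cosh x ^ 0) + (-480) * (x ^ 0 * Real.sinh x ^ 1 * Real.cosh x ^ 1) + (546) * (x ^ 0 * Real.sinh x ^ 1 * Real.cosh x ^ 2) + (183) * (x ^ 0 * Real.sinh x ^ 3 * Real.cosh x ^ 0) + (66) * (x ^ 1 * Real.sinh x ^ 0 * Real.cosh x ^ 1) + (-192) * (x ^ 1 * Real.sinh x ^ 0 * Real.cosh x ^ 2) + (-192) * (x ^ 1 * Real.sinh x ^ 2 * Real.cosh x ^ 0) + (16) * (x ^ 2 * Real.sinh x ^ 1 * Real.cosh x ^ 0) + (-64) * (x ^ 2 * Real.sinh x ^ 1 * Real.cosh x ^ 1) + (1) * (x ^ 3 * Real.sinh x ^ 0 * Real.cosh x ^ 1)) x := by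
  intro x
  have h := (((((((((((hd_mono (20) 0 0 1 x).add (hd_mono (-80) 0 0 2 x)).add (hd_mono (60) 0 0 3 x)).add (hd_mono (-80) 0 2 0 x)).add (hd_mono (183) 0 2 1 x)).add (hd_mono (40) 1 1 0 x)).add (hd_mono (-160) 1 1 1 x)).add (hd_mono (13) 2 0 1 x)).add (hd_mono (-16) 2 0 2 x)).add (hd_mono (-16) 2 2 0 x)).add (hd_mono (1) 3 1 0 x))
  refine h.congr_deriv ?_
  first
  | (norm_num; ring)
  | norm_num
  | ring

lemma hdQ6 : ∀ x : ℝ, HasDerivAt (fun t : ℝ => (60) * (t ^ 0 * Real.sinh t ^ 1 * Real.cosh t ^ 0) + (-480) * (t ^ 0 * Real.sinh t ^ 1 * Real.cosh t ^ 1) + (546) * (t ^ 0 * Real.sinh t ^ 1 * Real.cosh t ^ 2) + (183) * (t ^ 0 * Real.sinh t ^ 3 * Real.cosh t ^ 0) + (66) * (t ^ 1 * Real.sinh t ^ 0 * Real.cosh t ^ 1) + (-192) * (t ^ 1 * Real.sinh t ^ 0 * Real.cosh t ^ 2) + (-192) * (t ^ 1 * Real.sinh t ^ 2 * Real.cosh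 t ^ 0) + (16) * (t ^ 2 * Real.sinh t ^ 1 * Real.cosh t ^ 0) + (-64) * (t ^ 2 * Real.sinh t ^ 1 * Real.cosh t ^ 1) + (1) * (t ^ 3 * Real.sinh t ^ 0 * Real.cosh t ^ 1))
    ((126) * (x ^ 0 * Real.sinh x ^ 0 * Real.cosh x ^ 1) + (-672) * (x ^ 0 * Real.sinh x ^ 0 * Real.cosh x ^ 2) + (546) * (x ^ 0 * Real.sinh x ^ 0 * Real.cosh x ^ 3) + (-672) * (x ^ 0 * Real.sinh x ^ 2 * Real.cosh x ^ 0) + (1641) * (x ^ 0 * Real.sinh x ^ 2 * Real.cosh x ^ 1) + (98) * (x ^ 1 * Real.sinh x ^ 1 * Real.cosh x ^ 0) + (-896) * (x ^ 1 * Real.sinh x ^ 1 * Real.cosh x ^ 1) + (19) * (x ^ 2 * Real.sinh x ^ 0 * Real.cosh x ^ 1) + (-64) * (x ^ 2 * Real.sinh x ^ 0 * Real.cosh x ^ 2) + (-64) * (x ^ 2 * Real.sinh x ^ 2 * Real.cosh x ^ 0) + (1) * (x ^ 3 * Real.sinh x ^ 1 * Real.cosh x ^ 0)) x := by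
  intro x
  have h := ((((((((((hd_mono (60) 0 1 0 x).add (hd_mono (-480) 0 1 1 x)).add (hd_mono (546) 0 1 2 x)).add (hd_mono (183) 0 3 0 x)).add (hd_mono (66) 1 0 1 x)).add (hd_mono (-192) 1 0 2 x)).add (hd_mono (-192) 1 2 0 x)).add (hd_mono (16) 2 1 0 x)).add (hd_mono (-64) 2 1 1 x)).add (hd_mono (1) 3 0 1 x))
  refine h.congr_deriv ?_
  first
  | (norm_num; ring)
  | norm_num
  | ring

lemma hdQ7 : ∀ x : ℝ, HasDerivAt (fun t : ℝ => (126) * (t ^ 0 * Real.sinh t ^ 0 * Real.cosh t ^ 1) + (-672) * (t ^ 0 * Real.sinh t ^ 0 * Real.cosh t ^ 2) + (546) * (t ^ 0 * Real.sinh t ^ 0 * Real.cosh t ^ 3) + (-672) * (t ^ 0 * Real.sinh t ^ 2 * Real.cosh t ^ 0) + (1641) * (t ^ 0 * Real.sinh t ^ 2 * Real.cosh t ^ 1) + (98) * (t ^ 1 * Real.sinh t ^ 1 * Real.cosh t ^ 0) + (-896) * (t ^ 1 * Real.sinh t ^ 1 * Real.cosh t ^ 1) + (19) * (t ^ 2 *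 Real.sinh t ^ 0 * Real.cosh t ^ 1) + (-64) * (t ^ 2 * Real.sinh t ^ 0 * Real.cosh t ^ 2) + (-64) * (t ^ 2 * Real.sinh t ^ 2 * Real.cosh t ^ 0) + (1) * (t ^ 3 * Real.sinh t ^ 1 * Real.cosh t ^ 0))
    ((224) * (x ^ 0 * Real.sinh x ^ 1 * Real.cosh x ^ 0) + (-3584) * (x ^ 0 * Real.sinh x ^ 1 * Real.cosh x ^ 1) + (4920) * (x ^ 0 * Real.sinh x ^ 1 * Real.cosh x ^ 2) + (1641) * (x ^ 0 * Real.sinh x ^ 3 * Real.cosh x ^ 0) + (136) * (x ^ 1 * Real.sinh x ^ 0 * Real.cosh x ^ 1) + (-1024) * (x ^ 1 * Real.sinh x ^ 0 * Real.cosh x ^ 2) + (-1024) * (x ^ 1 * Real.sinh x ^ 2 * Real.cosh x ^ 0) + (22) * (x ^ 2 * Real.sinh x ^ 1 * Real.cosh x ^ 0) + (-256) * (x ^ 2 * Real.sinh x ^ 1 * Real.cosh x ^ 1) + (1) * (x ^ 3 * Real.sinh x ^ 0 * Real.cosh x ^ 1)) x := by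
  intro x
  have h := (((((((((((hd_mono (126) 0 0 1 x).add (hd_mono (-672) 0 0 2 x)).add (hd_mono (546) 0 0 3 x)).add (hd_mono (-672) 0 2 0 x)).add (hd_mono (1641) 0 2 1 x)).add (hd_mono (98) 1 1 0 x)).add (hd_mono (-896) 1 1 1 x)).add (hd_mono (19) 2 0 1 x)).add (hd_mono (-64) 2 0 2 x)).add (hd_mono (-64) 2 2 0 x)).add (hd_mono (1) 3 1 0 x))
  refine h.congr_deriv ?_
  first
  | (norm_num; ring)
  | norm_num
  | ring

lemma hdQ8 : ∀ x : ℝ, HasDerivAt (fun t : ℝ => (224) * (t ^ 0 * Real.sinh t ^ 1 * Real.cosh t ^ 0) + (-3584) * (t ^ 0 * Real.sinh t ^ 1 * Real.cosh t ^ 1) + (4920) * (t ^ 0 * Real.sinh t ^ 1 * Real.cosh t ^ 2) + (1641) * (t ^ 0 * Real.sinh t ^ 3 * Real.cosh t ^ 0) + (136) * (t ^ 1 * Real.sinh t ^ 0 * Real.cosh t ^ 1) + (-1024) * (t ^ 1 * Real.sinh t ^ 0 * Real.cosh t ^ 2) + (-1024) * (t ^ 1 * Real.sinh t ^ 2 *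 Real.cosh t ^ 0) + (22) * (t ^ 2 * Real.sinh t ^ 1 * Real.cosh t ^ 0) + (-256) * (t ^ 2 * Real.sinh t ^ 1 * Real.cosh t ^ 1) + (1) * (t ^ 3 * Real.sinh t ^ 0 * Real.cosh t ^ 1))
    ((360) * (x ^ 0 * Real.sinh x ^ 0 * Real.cosh x ^ 1) + (-4608) * (x ^ 0 * Real.sinh x ^ 0 * Real.cosh x ^ 2) + (4920) * (x ^ 0 * Real.sinh x ^ 0 * Real.cosh x ^ 3) + (-4608) * (x ^ 0 * Real.sinh x ^ 2 * Real.cosh x ^ 0) + (14763) * (x ^ 0 * Real.sinh x ^ 2 * Real.cosh x ^ 1) + (180) * (x ^ 1 * Real.sinh x ^ 1 * Real.cosh x ^ 0) + (-4608) * (x ^ 1 * Real.sinh x ^ 1 * Real.cosh x ^ 1) + (25) * (x ^ 2 * Real.sinh x ^ 0 * Real.cosh x ^ 1) + (-256) * (x ^ 2 * Real.sinh x ^ 0 * Real.cosh x ^ 2) + (-256) * (x ^ 2 * Real.sinh x ^ 2 * Real.cosh x ^ 0) + (1) * (x ^ 3 * Real.sinh x ^ 1 * Real.cosh x ^ 0))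 x := by
  intro x
  have h := ((((((((((hd_mono (224) 0 1 0 x).add (hd_mono (-3584) 0 1 1 x)).add (hd_mono (4920) 0 1 2 x)).add (hd_mono (1641) 0 3 0 x)).add (hd_mono (136) 1 0 1 x)).add (hd_mono (-1024) 1 0 2 x)).add (hd_mono (-1024) 1 2 0 x)).add (hd_mono (22) 2 1 0 x)).add (hd_mono (-256) 2 1 1 x)).add (hd_mono (1) 3 0 1 x))
  refine h.congr_deriv ?_
  first
  | (norm_num; ring)
  | norm_num
  | ring

lemma Qtop : ∀ x : ℝ, 0 < x → 0 < (360) * (x ^ 0 * Real.sinh x ^ 0 * Real.cosh x ^ 1) + (-4608) * (x ^ 0 * Real.sinh x ^ 0 * Real.cosh x ^ 2) + (4920) * (x ^ 0 * Real.sinh x ^ 0 * Real.cosh x ^ 3) + (-4608) * (x ^ 0 * Real.sinh x ^ 2 * Real.cosh x ^ 0) + (14763) * (x ^ 0 * Real.sinh x ^ 2 * Real.cosh x ^ 1) + (180) * (x ^ 1 * Real.sinh x ^ 1 * Real.cosh x ^ 0) + (-4608) * (x ^ 1 * Real.sinh x ^ 1 * Real.cosh x ^ 1) + (25) * (x ^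 2 * Real.sinh x ^ 0 * Real.cosh x ^ 1) + (-256) * (x ^ 2 * Real.sinh x ^ 0 * Real.cosh x ^ 2) + (-256) * (x ^ 2 * Real.sinh x ^ 2 * Real.cosh x ^ 0) + (1) * (x ^ 3 * Real.sinh x ^ 1 * Real.cosh x ^ 0) := by
  intro x hx
  have hc2 := Real.cosh_sq x
  have h1c := Real.one_le_cosh x
  have hxs := Real.self_lt_sinh_iff.2 hx
  have hs := Real.sinh_pos_iff.2 hx
  have hx2 : x^2 ≤ 2*Real.cosh x - 2 := by
    have h1 := Real.self_lt_sinh_iff.2 (half_pos hx)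
    have h2 : Real.cosh x = 2*Real.sinh (x/2)^2 + 1 := by
      have h3 := Real.cosh_two_mul (x/2)
      have h4 := Real.cosh_sq (x/2)
      rw [show (2:ℝ)*(x/2) = x by ring] at h3
      linarith
    nlinarith [h1, h2, half_pos hx]
  nlinarith [mul_nonneg (mul_nonneg (sub_nonneg.2 hx2) (Real.cosh_pos x).le) (Real.cosh_pos x).le, mul_nonneg (mul_nonneg (sub_nonneg.2 hxs.le) hs.le) (by linarith : (0:ℝ) ≤ Real.cosh x), sq_nonneg (Real.cosh x - 1), mul_nonneg (mul_nonneg (sub_nonneg.2 h1c) (sub_nonneg.2 h1c)) (sub_nonneg.2 h1c), mul_pos hx hs, mul_nonneg (mul_nonneg hx.le hx.le) (mul_nonneg hx.le hs.le), mul_nonneg (mul_nonneg hx.le hx.le) (Real.cosh_pos x).le]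

lemma Qpos8 : ∀ x : ℝ, 0 < x → 0 < (224) * (x ^ 0 * Real.sinh x ^ 1 * Real.cosh x ^ 0) + (-3584) * (x ^ 0 * Real.sinh x ^ 1 * Real.cosh x ^ 1) + (4920) * (x ^ 0 * Real.sinh x ^ 1 * Real.cosh x ^ 2) + (1641) * (x ^ 0 * Real.sinh x ^ 3 * Real.cosh x ^ 0) + (136) * (x ^ 1 * Real.sinh x ^ 0 * Real.cosh x ^ 1) + (-1024) * (x ^ 1 * Real.sinh x ^ 0 * Real.cosh x ^ 2) + (-1024) * (x ^ 1 * Real.sinh x ^ 2 * Real.cosh x ^ 0) + (22) * (x ^ 2 * Real.sinh x ^ 1 * Real.cosh x ^ 0) + (-256) * (x ^ 2 * Real.sinh x ^ 1 * Real.cosh x ^ 1) + (1) * (x ^ 3 * Real.sinh x ^ 0 * Real.cosh x ^ 1) := by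
  have h := cascade hdQ8 (by norm_num) Qtop
  exact fun x hx => h x hx

lemma Qpos7 : ∀ x : ℝ, 0 < x → 0 < (126) * (x ^ 0 * Real.sinh x ^ 0 * Real.cosh x ^ 1) + (-672) * (x ^ 0 * Real.sinh x ^ 0 * Real.cosh x ^ 2) + (546) * (x ^ 0 * Real.sinh x ^ 0 * Real.cosh x ^ 3) + (-672) * (x ^ 0 * Real.sinh x ^ 2 * Real.cosh x ^ 0) + (1641) * (x ^ 0 * Real.sinh x ^ 2 * Real.cosh x ^ 1) + (98) * (x ^ 1 * Real.sinh x ^ 1 * Real.cosh x ^ 0) + (-896) * (x ^ 1 * Real.sinh x ^ 1 * Real.cosh x ^ 1) + (19) * (x ^ 2 * Real.sinh x ^ 0 * Real.cosh x ^ 1) + (-64) * (x ^ 2 * Real.sinh x ^ 0 * Real.cosh x ^ 2) + (-64) * (x ^ 2 * Real.sinh x ^ 2 * Real.cosh x ^ 0) + (1) * (x ^ 3 * Real.sinh x ^ 1 * Real.cosh x ^ 0) := by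
  have h := cascade hdQ7 (by norm_num) Qpos8
  exact fun x hx => h x hx

lemma Qpos6 : ∀ x : ℝ, 0 < x → 0 < (60) * (x ^ 0 * Real.sinh x ^ 1 * Real.cosh x ^ 0) + (-480) * (x ^ 0 * Real.sinh x ^ 1 * Real.cosh x ^ 1) + (546) * (x ^ 0 * Real.sinh x ^ 1 * Real.cosh x ^ 2) + (183) * (x ^ 0 * Real.sinh x ^ 3 * Real.cosh x ^ 0) + (66) * (x ^ 1 * Real.sinh x ^ 0 * Real.cosh x ^ 1) + (-192) * (x ^ 1 * Real.sinh x ^ 0 * Real.cosh x ^ 2) + (-192) * (x ^ 1 * Real.sinh x ^ 2 * Real.cosh x ^ 0) + (16) * (x ^ 2 * Real.sinh x ^ 1 * Real.cosh x ^ 0) + (-64) * (x ^ 2 * Real.sinh x ^ 1 * Real.cosh x ^ 1) + (1) * (x ^ 3 * Real.sinh x ^ 0 * Real.cosh x ^ 1) := by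
  have h := cascade hdQ6 (by norm_num) Qpos7
  exact fun x hx => h x hx

lemma Qpos5 : ∀ x : ℝ, 0 < x → 0 < (20) * (x ^ 0 * Real.sinh x ^ 0 * Real.cosh x ^ 1) + (-80) * (x ^ 0 * Real.sinh x ^ 0 * Real.cosh x ^ 2) + (60) * (x ^ 0 * Real.sinh x ^ 0 * Real.cosh x ^ 3) + (-80) * (x ^ 0 * Real.sinh x ^ 2 * Real.cosh x ^ 0) + (183) * (x ^ 0 * Real.sinh x ^ 2 * Real.cosh x ^ 1) + (40) * (x ^ 1 * Real.sinh x ^ 1 * Real.cosh x ^ 0) + (-160) * (x ^ 1 * Real.sinh x ^ 1 * Real.cosh x ^ 1) + (13) * (x ^ 2 * Real.sinh x ^ 0 * Real.cosh x ^ 1) + (-16) * (x ^ 2 * Real.sinh x ^ 0 * Real.cosh x ^ 2) + (-16) * (x ^ 2 * Real.sinh x ^ 2 * Real.cosh x ^ 0) + (1) * (x ^ 3 * Real.sinh x ^ 1 * Real.cosh x ^ 0) := by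
  have h := cascade hdQ5 (by norm_num) Qpos6
  exact fun x hx => h x hx

lemma Qpos4 : ∀ x : ℝ, 0 < x → 0 < (-48) * (x ^ 0 * Real.sinh x ^ 1 * Real.cosh x ^ 1) + (60) * (x ^ 0 * Real.sinh x ^ 1 * Real.cosh x ^ 2) + (21) * (x ^ 0 * Real.sinh x ^ 3 * Real.cosh x ^ 0) + (20) * (x ^ 1 * Real.sinh x ^ 0 * Real.cosh x ^ 1) + (-32) * (x ^ 1 * Real.sinh x ^ 0 * Real.cosh x ^ 2) + (-32) * (x ^ 1 * Real.sinh x ^ 2 * Real.cosh x ^ 0) + (10) * (x ^ 2 * Real.sinh x ^ 1 * Real.cosh x ^ 0) + (-16) * (x ^ 2 * Real.sinh x ^ 1 * Real.cosh x ^ 1) + (1) * (x ^ 3 * Real.sinh x ^ 0 * Real.cosh x ^ 1) := by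
  have h := cascade hdQ4 (by norm_num) Qpos5
  exact fun x hx => h x hx

lemma Qpos3 : ∀ x : ℝ, 0 < x → 0 < (6) * (x ^ 0 * Real.sinh x ^ 0 * Real.cosh x ^ 0) + (-6) * (x ^ 0 * Real.sinh x ^ 0 * Real.cosh x ^ 1) + (-6) * (x ^ 0 * Real.sinh x ^ 0 * Real.cosh x ^ 2) + (6) * (x ^ 0 * Real.sinh x ^ 0 * Real.cosh x ^ 3) + (-6) * (x ^ 0 * Real.sinh x ^ 2 * Real.cosh x ^ 0) + (21) * (x ^ 0 * Real.sinh x ^ 2 * Real.cosh x ^ 1) + (6) * (x ^ 1 * Real.sinh x ^ 1 * Real.cosh x ^ 0) + (-24) * (x ^ 1 * Real.sinh x ^ 1 * Real.cosh x ^ 1) + (7) * (x ^ 2 * Real.sinh x ^ 0 * Real.cosh x ^ 1) + (-4) * (x ^ 2 * Real.sinh x ^ 0 * Real.cosh x ^ 2) + (-4) * (x ^ 2 * Real.sinh x ^ 2 * Real.cosh x ^ 0) + (1) * (x ^ 3 * Real.sinh x ^ 1 * Real.cosh x ^ 0) := by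
  have h := cascade hdQ3 (by norm_num) Qpos4
  exact fun x hx => h x hx

lemma Qpos2 : ∀ x : ℝ, 0 < x → 0 < (-4) * (x ^ 0 * Real.sinh x ^ 1 * Real.cosh x ^ 0) + (-2) * (x ^ 0 * Real.sinh x ^ 1 * Real.cosh x ^ 1) + (6) * (x ^ 0 * Real.sinh x ^ 1 * Real.cosh x ^ 2) + (3) * (x ^ 0 * Real.sinh x ^ 3 * Real.cosh x ^ 0) + (6) * (x ^ 1 * Real.sinh x ^ 0 * Real.cosh x ^ 0) + (-2) * (x ^ 1 * Real.sinh x ^ 0 * Real.cosh x ^ 1) + (-4) * (x ^ 1 * Real.sinh x ^ 0 * Real.cosh x ^ 2) + (-4) * (x ^ 1 * Real.sinh x ^ 2 * Real.cosh x ^ 0) + (4) * (x ^ 2 * Real.sinh x ^ 1 * Real.cosh x ^ 0) + (-4) * (x ^ 2 * Real.sinh x ^ 1 * Real.cosh x ^ 1) + (1) * (x ^ 3 * Real.sinh x ^ 0 * Real.cosh x ^ 1) := by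
  have h := cascade hdQ2 (by norm_num) Qpos3
  exact fun x hx => h x hx

lemma Qpos1 : ∀ x : ℝ, 0 < x → 0 < (3) * (x ^ 0 * Real.sinh x ^ 2 * Real.cosh x ^ 1) + (-4) * (x ^ 1 * Real.sinh x ^ 1 * Real.cosh x ^ 0) + (-2) * (x ^ 1 * Real.sinh x ^ 1 * Real.cosh x ^ 1) + (3) * (x ^ 2 * Real.sinh x ^ 0 * Real.cosh x ^ 0) + (1) * (x ^ 2 * Real.sinh x ^ 0 * Real.cosh x ^ 1) + (-1) * (x ^ 2 * Real.sinh x ^ 0 * Real.cosh x ^ 2) + (-1) * (x ^ 2 * Real.sinh x ^ 2 * Real.cosh x ^ 0) + (1) * (x ^ 3 * Real.sinh x ^ 1 * Real.cosh x ^ 0) := by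
  have h := cascade hdQ1 (by norm_num) Qpos2
  exact fun x hx => h x hx

lemma Qpos : ∀ x : ℝ, 0 < x → 0 < (1) * (x ^ 0 * Real.sinh x ^ 3 * Real.cosh x ^ 0) + (-2) * (x ^ 2 * Real.sinh x ^ 1 * Real.cosh x ^ 0) + (-1) * (x ^ 2 * Real.sinh x ^ 1 * Real.cosh x ^ 1) + (1) * (x ^ 3 * Real.sinh x ^ 0 * Real.cosh x ^ 0) + (1) * (x ^ 3 * Real.sinh x ^ 0 * Real.cosh x ^ 1) := by
  have h := cascade hdQ0 (by norm_num) Qpos1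
  exact fun x hx => h x hx

lemma hdW0 : ∀ x : ℝ, HasDerivAt (fun t : ℝ => (-2) * (t ^ 0 * Real.sinh t ^ 2 * Real.cosh t ^ 0) + (1) * (t ^ 1 * Real.sinh t ^ 1 * Real.cosh t ^ 1) + (1) * (t ^ 2 * Real.sinh t ^ 0 * Real.cosh t ^ 0))
    ((-3) * (x ^ 0 * Real.sinh x ^ 1 * Real.cosh x ^ 1) + (2) * (x ^ 1 * Real.sinh x ^ 0 * Real.cosh x ^ 0) + (1) * (x ^ 1 * Real.sinh x ^ 0 * Real.cosh x ^ 2) + (1) * (x ^ 1 * Real.sinh x ^ 2 * Real.cosh x ^ 0)) x := by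
  intro x
  have h := (((hd_mono (-2) 0 2 0 x).add (hd_mono (1) 1 1 1 x)).add (hd_mono (1) 2 0 0 x))
  refine h.congr_deriv ?_
  first
  | (norm_num; ring)
  | norm_num
  | ring

lemma hdW1 : ∀ x : ℝ, HasDerivAt (fun t : ℝ => (-3) * (t ^ 0 * Real.sinh t ^ 1 * Real.cosh t ^ 1) + (2) * (t ^ 1 * Real.sinh t ^ 0 * Real.cosh t ^ 0) + (1) * (t ^ 1 * Real.sinh t ^ 0 * Real.cosh t ^ 2) + (1) * (t ^ 1 * Real.sinh t ^ 2 * Real.cosh t ^ 0))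
    ((2) * (x ^ 0 * Real.sinh x ^ 0 * Real.cosh x ^ 0) + (-2) * (x ^ 0 * Real.sinh x ^ 0 * Real.cosh x ^ 2) + (-2) * (x ^ 0 * Real.sinh x ^ 2 * Real.cosh x ^ 0) + (4) * (x ^ 1 * Real.sinh x ^ 1 * Real.cosh x ^ 1)) x := by
  intro x
  have h := ((((hd_mono (-3) 0 1 1 x).add (hd_mono (2) 1 0 0 x)).add (hd_mono (1) 1 0 2 x)).add (hd_mono (1) 1 2 0 x))
  refine h.congr_deriv ?_
  first
  | (norm_num; ring)
  | norm_num
  | ring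

lemma Wtop : ∀ x : ℝ, 0 < x → 0 < (2) * (x ^ 0 * Real.sinh x ^ 0 * Real.cosh x ^ 0) + (-2) * (x ^ 0 * Real.sinh x ^ 0 * Real.cosh x ^ 2) + (-2) * (x ^ 0 * Real.sinh x ^ 2 * Real.cosh x ^ 0) + (4) * (x ^ 1 * Real.sinh x ^ 1 * Real.cosh x ^ 1) := by
  intro x hx
  have hc2 := Real.cosh_sq x
  have hs := Real.sinh_pos_iff.2 hx
  have hB := Bpos x hx
  nlinarith [mul_pos hs hB]

lemma Wpos1 : ∀ x : ℝ, 0 < x → 0 < (-3) * (x ^ 0 * Real.sinh x ^ 1 * Real.cosh x ^ 1) + (2) * (x ^ 1 * Real.sinh x ^ 0 * Real.cosh x ^ 0) + (1) * (x ^ 1 * Real.sinh x ^ 0 * Real.cosh x ^ 2) + (1) * (x ^ 1 * Real.sinh x ^ 2 * Real.cosh x ^ 0) := by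
  have h := cascade hdW1 (by norm_num) Wtop
  exact fun x hx => h x hx

lemma Wpos : ∀ x : ℝ, 0 < x → 0 < (-2) * (x ^ 0 * Real.sinh x ^ 2 * Real.cosh x ^ 0) + (1) * (x ^ 1 * Real.sinh x ^ 1 * Real.cosh x ^ 1) + (1) * (x ^ 2 * Real.sinh x ^ 0 * Real.cosh x ^ 0) := by
  have h := cascade hdW0 (by norm_num) Wpos1
  exact fun x hx => h x hx


-- positivity from strict monotonicity on Ioi 0 plus limit 0 at 0+
lemma pos_of_mono_limit {f : ℝ → ℝ} (hmono : StrictMonoOn f (Set.Ioi 0))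
    (hlim : Filter.Tendsto f (nhdsWithin 0 (Set.Ioi 0)) (nhds 0)) : ∀ x, 0 < x → 0 < f x := by
  intro x hx
  have h2 : 0 ≤ f (x/2) := by
    refine le_of_tendsto hlim ?_
    filter_upwards [Ioo_mem_nhdsGT_of_mem (Set.mem_Ico.2 ⟨le_refl (0:ℝ), half_pos hx⟩)] with t ht
    exact (hmono ht.1 (by simp only [Set.mem_Ioi]; linarith) ht.2).le
  have h3 : f (x/2) < f x := hmono (by simp only [Set.mem_Ioi]; linarith) (by simpa using hx) (by linarith)
  linarith

lemma mono_of_derivpos {f f' : ℝ → ℝ} (hd : ∀ x : ℝ, 0 < x → HasDerivAt f (f' x) x)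
    (hp : ∀ x, 0 < x → 0 < f' x) : StrictMonoOn f (Set.Ioi 0) := by
  apply strictMonoOn_of_deriv_pos (convex_Ioi 0)
  · exact fun t ht => (hd t ht).continuousAt.continuousWithinAt
  · intro t ht
    rw [interior_Ioi] at ht
    rw [(hd t ht).deriv]
    exact hp t ht

lemma sinh_div_self_tendsto : Filter.Tendsto (fun t : ℝ => Real.sinh t / t) (nhdsWithin 0 (Set.Ioi 0)) (nhds 1) := by
  have h0 : HasDerivAt Real.sinh 1 0 := by simpa using (hasDerivAt_id (0:ℝ)).sinh
  have h := hasDerivAt_iff_tendsto_slope.1 h0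
  have h2 := h.mono_left (nhdsWithin_mono 0 (fun y hy => by
    simp only [Set.mem_compl_iff, Set.mem_singleton_iff]
    exact ne_of_gt hy))
  refine h2.congr (fun t => ?_)
  rw [slope_def_field]
  simp

lemma cosh_tendsto : Filter.Tendsto (fun t : ℝ => Real.cosh t) (nhdsWithin 0 (Set.Ioi 0)) (nhds 1) := by
  have := (Real.continuous_cosh.tendsto 0).mono_left (nhdsWithin_le_nhds (s := Set.Ioi (0:ℝ)))
  simpa using this

-- K1 : for x>0,  x cosh x / sinh x - 1 < 2 (log sinh x - log x)
lemma K1 : ∀ x : ℝ, 0 < x → x * Real.cosh x / Real.sinh x - 1 < 2 * (Real.log (Real.sinh x) - Real.log x) := by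
  set f : ℝ → ℝ := fun t => 2 * Real.log (Real.sinh t) - 2 * Real.log t - t * Real.cosh t / Real.sinh t + 1 with hf
  have hd : ∀ x : ℝ, 0 < x → HasDerivAt f
      ((x * Real.cosh x * Real.sinh x - 2 * Real.sinh x ^ 2 - x^2 * Real.sinh x ^ 2 + x^2 * Real.cosh x ^ 2) / (x * Real.sinh x^2)) x := by
    intro x hx
    have hS := Real.sinh_pos_iff.2 hx
    have hs : HasDerivAt Real.sinh (Real.cosh x) x := by simpa using (hasDerivAt_id x).sinh
    have hc : HasDerivAt Real.cosh (Real.sinh x) x := by simpa using (hasDerivAt_id x).cosh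
    have h1 := (hs.log hS.ne').const_mul (2:ℝ)
    have h2 := (Real.hasDerivAt_log hx.ne').const_mul (2:ℝ)
    have h3 := ((hasDerivAt_id x).mul hc).div hs hS.ne'
    have h := ((h1.sub h2).sub h3).add_const (1:ℝ)
    refine h.congr_deriv (Eq.symm ?_)
    have hx2 : x ≠ 0 := hx.ne'
    have hS2 : Real.sinh x ≠ 0 := hS.ne'
    simp only [id_eq, Pi.mul_apply, Pi.add_apply, Pi.sub_apply, Pi.div_apply]
    field_simp
    ring
  have hmono := mono_of_derivpos hd (fun x hx => by
    have hS := Real.sinh_pos_iff.2 hx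
    have hW := Wpos x hx
    have hnum : x * Real.cosh x * Real.sinh x - 2 * Real.sinh x ^ 2 - x^2 * Real.sinh x ^ 2 + x^2 * Real.cosh x ^ 2
        = (1) * (x ^ 1 * Real.sinh x ^ 1 * Real.cosh x ^ 1) + (1) * (x ^ 2 * Real.sinh x ^ 0 * Real.cosh x ^ 0) + (-2) * (x ^ 0 * Real.sinh x ^ 2 * Real.cosh x ^ 0) := by
      linear_combination (x^2 : ℝ) * Real.cosh_sq x
    rw [hnum]
    exact div_pos (by linarith [hW]) (by positivity))
  have hlim : Filter.Tendsto f (nhdsWithin 0 (Set.Ioi 0)) (nhds 0) := by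
    have hu := sinh_div_self_tendsto
    have hcc := cosh_tendsto
    have hl : Filter.Tendsto (fun t : ℝ => 2 * Real.log (Real.sinh t / t) - Real.cosh t / (Real.sinh t / t) + 1)
        (nhdsWithin 0 (Set.Ioi 0)) (nhds (2 * Real.log 1 - 1/1 + 1)) :=
      ((((Real.continuousAt_log one_ne_zero).tendsto.comp hu).const_mul 2).sub (hcc.div hu one_ne_zero)).add tendsto_const_nhds
    norm_num at hl
    refine hl.congr' ?_
    filter_upwards [self_mem_nhdsWithin] with t ht
    have ht0 : (0:ℝ) < t := ht
    have hS := Real.sinh_pos_iff.2 ht0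
    show 2 * Real.log (Real.sinh t / t) - Real.cosh t / (Real.sinh t / t) + 1
        = 2 * Real.log (Real.sinh t) - 2 * Real.log t - t * Real.cosh t / Real.sinh t + 1
    rw [Real.log_div hS.ne' ht0.ne']
    field_simp
  intro x hx
  have hp := pos_of_mono_limit hmono hlim x hx
  have hp2 : 0 < 2 * Real.log (Real.sinh x) - 2 * Real.log x - x * Real.cosh x / Real.sinh x + 1 := hp
  linarith

-- K3 : for x>0, exp (x cosh x/sinh x - 1) + sinh x / x < 1 + cosh x
lemma K3 : ∀ x : ℝ, 0 < x → Real.exp (x * Real.cosh x / Real.sinh x - 1) + Real.sinh x / x < 1 + Real.cosh x := by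
  set f : ℝ → ℝ := fun t => Real.log (1 + Real.cosh t - Real.sinh t / t) - t * Real.cosh t / Real.sinh t + 1 with hf
  have hDpos : ∀ x : ℝ, 0 < x → 0 < 1 + Real.cosh x - Real.sinh x / x := by
    intro x hx
    have hB := Bpos x hx
    have h : Real.sinh x / x < Real.cosh x := by
      rw [div_lt_iff₀ hx]
      nlinarith [hB]
    linarith
  have hd : ∀ x : ℝ, 0 < x → HasDerivAt f
      ((x^2 * Real.sinh x ^3 + Real.sinh x ^3 - x^2 * Real.cosh x * Real.sinh x - x^2 * Real.cosh x ^2 * Real.sinh x + x^3 + x^3 * Real.cosh x - x^2 * Real.sinh x)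
        / (x^2 * Real.sinh x^2 * (1 + Real.cosh x - Real.sinh x / x))) x := by
    intro x hx
    have hS := Real.sinh_pos_iff.2 hx
    have hD := hDpos x hx
    have hB := Bpos x hx
    have hs : HasDerivAt Real.sinh (Real.cosh x) x := by simpa using (hasDerivAt_id x).sinh
    have hc : HasDerivAt Real.cosh (Real.sinh x) x := by simpa using (hasDerivAt_id x).cosh
    have hinner := ((hasDerivAt_const x (1:ℝ)).add hc).sub (hs.div (hasDerivAt_id x) hx.ne')
    have h1 := hinner.log (by simpa [id_eq] using hD.ne')
    have h3 := ((hasDerivAt_id x).mul hc).div hs hS.ne'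
    have h := (h1.sub h3).add_const (1:ℝ)
    have hx2 : x ≠ 0 := hx.ne'
    have hS2 : Real.sinh x ≠ 0 := hS.ne'
    have hK2 : x + x * Real.cosh x - Real.sinh x ≠ 0 := by nlinarith [hB]
    have hD2 : 1 + Real.cosh x - Real.sinh x / x = (x + x * Real.cosh x - Real.sinh x) / x := by
      field_simp
    refine h.congr_deriv (Eq.symm ?_)
    simp only [id_eq, Pi.mul_apply, Pi.add_apply, Pi.sub_apply, Pi.div_apply]
    rw [hD2]
    field_simp
    have hK4 : x * (1 + Real.cosh x) - Real.sinh x ≠ 0 := by contrapose! hK2; linarith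
    have hE : x * (Real.sinh x * (Real.cosh x + x * Real.sinh x) - x * Real.cosh x ^ 2) = x * (Real.sinh x * Real.cosh x - x) := by
      linear_combination (-x^2) * Real.cosh_sq x
    rw [hE, eq_sub_iff_add_eq, div_add' _ _ _ hK4]
    congr 1
    ring
  have hmono := mono_of_derivpos hd (fun x hx => by
    have hS := Real.sinh_pos_iff.2 hx
    have hD := hDpos x hx
    have hQ := Qpos x hx
    have hnum : x^2 * Real.sinh x ^3 + Real.sinh x ^3 - x^2 * Real.cosh x * Real.sinh x - x^2 * Real.cosh x ^2 * Real.sinh x + x^3 + x^3 * Real.cosh x - x^2 * Real.sinh x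
        = (1) * (x ^ 0 * Real.sinh x ^ 3 * Real.cosh x ^ 0) + (-2) * (x ^ 2 * Real.sinh x ^ 1 * Real.cosh x ^ 0) + (-1) * (x ^ 2 * Real.sinh x ^ 1 * Real.cosh x ^ 1) + (1) * (x ^ 3 * Real.sinh x ^ 0 * Real.cosh x ^ 0) + (1) * (x ^ 3 * Real.sinh x ^ 0 * Real.cosh x ^ 1) := by
      linear_combination (-(x^2 * Real.sinh x) : ℝ) * Real.cosh_sq x
    rw [hnum]
    exact div_pos (by linarith [hQ]) (mul_pos (by positivity) hD))
  have hlim : Filter.Tendsto f (nhdsWithin 0 (Set.Ioi 0)) (nhds 0) := by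
    have hu := sinh_div_self_tendsto
    have hcc := cosh_tendsto
    have hl : Filter.Tendsto (fun t : ℝ => Real.log (1 + Real.cosh t - Real.sinh t / t) - Real.cosh t / (Real.sinh t / t) + 1)
        (nhdsWithin 0 (Set.Ioi 0)) (nhds (Real.log (1 + 1 - 1) - 1/1 + 1)) :=
      (((Real.continuousAt_log (by norm_num)).tendsto.comp ((tendsto_const_nhds.add hcc).sub hu)).sub (hcc.div hu one_ne_zero)).add tendsto_const_nhds
    norm_num at hl
    refine hl.congr' ?_
    filter_upwards [self_mem_nhdsWithin] with t ht
    have ht0 : (0:ℝ) < t := ht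
    have hS := Real.sinh_pos_iff.2 ht0
    show Real.log (1 + Real.cosh t - Real.sinh t / t) - Real.cosh t / (Real.sinh t / t) + 1
        = Real.log (1 + Real.cosh t - Real.sinh t / t) - t * Real.cosh t / Real.sinh t + 1
    rw [show Real.cosh t / (Real.sinh t / t) = t * Real.cosh t / Real.sinh t by field_simp]
  intro x hx
  have hp := pos_of_mono_limit hmono hlim x hx
  have hp2 : 0 < Real.log (1 + Real.cosh x - Real.sinh x / x) - x * Real.cosh x / Real.sinh x + 1 := hp
  have hD := hDpos x hx
  have h2 : x * Real.cosh x / Real.sinh x - 1 < Real.log (1 + Real.cosh x - Real.sinh x / x) := by linarith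
  have h3 := Real.exp_lt_exp.2 h2
  rw [Real.exp_log hD] at h3
  linarith

noncomputable def G (a b : ℝ) : ℝ := Real.sqrt (a * b)
noncomputable def L (a b : ℝ) : ℝ := (a - b) / (Real.log a - Real.log b)
noncomputable def I (a b : ℝ) : ℝ := (1 / Real.exp 1) * (a ^ a / b ^ b) ^ (1 / (a - b))

lemma sqrt_rep (p q : ℝ) (hp : 0 < p) (hpq : p < q) :
    Real.sqrt (q * p) = Real.exp ((Real.log q + Real.log p) / 2) := by
  have hq : 0 < q := hp.trans hpq
  rw [← Real.log_mul hq.ne' hp.ne', ← Real.log_sqrt (by positivity), Real.exp_log (Real.sqrt_pos.2 (by positivity))]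

lemma mean_rep_hi (p q : ℝ) (hp : 0 < p) (hpq : p < q) :
    q = Real.sqrt (q * p) * Real.exp ((Real.log q - Real.log p) / 2) := by
  have hq : 0 < q := hp.trans hpq
  rw [sqrt_rep p q hp hpq, ← Real.exp_add,
    show (Real.log q + Real.log p) / 2 + (Real.log q - Real.log p) / 2 = Real.log q by ring,
    Real.exp_log hq]

lemma mean_rep_lo (p q : ℝ) (hp : 0 < p) (hpq : p < q) :
    p = Real.sqrt (q * p) * Real.exp (-((Real.log q - Real.log p) / 2)) := by
  rw [sqrt_rep p q hp hpq, ← Real.exp_add,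
    show (Real.log q + Real.log p) / 2 + -((Real.log q - Real.log p) / 2) = Real.log p by ring,
    Real.exp_log hp]

-- geometric mean < logarithmic mean
lemma glb (p q : ℝ) (hp : 0 < p) (hpq : p < q) :
    Real.sqrt (q * p) < (q - p) / (Real.log q - Real.log p) := by
  have hq : 0 < q := hp.trans hpq
  have h1 := mean_rep_hi p q hp hpq
  have h2 := mean_rep_lo p q hp hpq
  set gq := Real.sqrt (q * p) with hgq
  set y := (Real.log q - Real.log p) / 2 with hydef
  have hg : 0 < gq := Real.sqrt_pos.2 (by positivity)
  have hy : 0 < y := by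
    have := Real.log_lt_log hp hpq
    rw [hydef]; linarith
  have hsub : q - p = gq * (2 * Real.sinh y) := by
    rw [Real.sinh_eq]
    conv_lhs => rw [h1, h2]
    ring
  rw [hsub, show Real.log q - Real.log p = 2 * y by rw [hydef]; ring]
  rw [lt_div_iff₀ (by positivity)]
  have hsy := Real.self_lt_sinh_iff.2 hy
  nlinarith [hg, hsy, hy]

lemma G_symm (a b : ℝ) : G a b = G b a := by rw [G, G, mul_comm]

lemma L_symm (a b : ℝ) : L a b = L b a := by
  rw [L, L, show b - a = -(a - b) by ring, show Real.log b - Real.log a = -(Real.log a - Real.log b) by ring,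
    neg_div_neg_eq]

lemma I_symm (a b : ℝ) (ha : 0 < a) (hb : 0 < b) : I a b = I b a := by
  rw [I, I]
  congr 1
  rw [Real.rpow_def_of_pos (div_pos (Real.rpow_pos_of_pos ha a) (Real.rpow_pos_of_pos hb b)),
    Real.rpow_def_of_pos (div_pos (Real.rpow_pos_of_pos hb b) (Real.rpow_pos_of_pos ha a)),
    Real.log_div (Real.rpow_pos_of_pos ha a).ne' (Real.rpow_pos_of_pos hb b).ne',
    Real.log_div (Real.rpow_pos_of_pos hb b).ne' (Real.rpow_pos_of_pos ha a).ne']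
  congr 1
  rw [show (Real.log (b ^ b) - Real.log (a ^ a)) = -(Real.log (a ^ a) - Real.log (b ^ b)) by ring,
    show ((1:ℝ) / (b - a)) = -(1 / (a - b)) by rw [show b - a = -(a - b) by ring, div_neg]]
  ring

set_option maxHeartbeats 1000000 in
theorem main' (a b : ℝ) (hb : 0 < b) (hba : b < a) :
    G a b * I a b / L a b < Real.sqrt (I a b * G a b) ∧
    Real.sqrt (I a b * G a b) < L (I a b) (G a b) ∧
    L (I a b) (G a b) < L a b := by
  have ha : 0 < a := hb.trans hba
  set g := Real.sqrt (a * b) with hgdef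
  have hg : 0 < g := Real.sqrt_pos.2 (by positivity)
  set x := (Real.log a - Real.log b) / 2 with hxdef
  have hx : 0 < x := by
    have := Real.log_lt_log hb hba
    rw [hxdef]; linarith
  have hea : a = g * Real.exp x := mean_rep_hi b a hb hba
  have heb : b = g * Real.exp (-x) := mean_rep_lo b a hb hba
  set S := Real.sinh x with hSdef
  set C := Real.cosh x with hCdef
  have hS : 0 < S := Real.sinh_pos_iff.2 hx
  have hB : 0 < x * C - S := Bpos x hx
  have hea' : a = g * (C + S) := by rw [hSdef, hCdef, Real.cosh_add_sinh]; exact hea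
  have heb' : b = g * (C - S) := by rw [hSdef, hCdef, Real.cosh_sub_sinh]; exact heb
  have hsub : a - b = g * (2 * S) := by rw [hea', heb']; ring
  have hsum : a + b = g * (2 * C) := by rw [hea', heb']; ring
  have hlog2 : Real.log a - Real.log b = 2 * x := by rw [hxdef]; ring
  have hG : G a b = g := rfl
  have hL : L a b = g * (S / x) := by
    rw [L, hsub, hlog2]
    field_simp
  set u := x * C / S - 1 with hudef
  have hu : 0 < u := by
    rw [hudef, sub_pos, lt_div_iff₀ hS]
    nlinarith [hB]
  have hla : Real.log a = Real.log g + x := by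
    rw [hea, Real.log_mul hg.ne' (Real.exp_pos x).ne', Real.log_exp]
  have hlb : Real.log b = Real.log g - x := by
    rw [heb, Real.log_mul hg.ne' (Real.exp_pos (-x)).ne', Real.log_exp]
    ring
  have hI : I a b = g * Real.exp u := by
    rw [I]
    rw [Real.rpow_def_of_pos ha, Real.rpow_def_of_pos hb, ← Real.exp_sub,
      Real.rpow_def_of_pos (Real.exp_pos _), Real.log_exp]
    rw [show (1:ℝ) / Real.exp 1 = Real.exp (-1) by rw [Real.exp_neg, one_div]]
    rw [← Real.exp_add]
    conv_rhs => rw [← Real.exp_log hg]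
    rw [← Real.exp_add]
    congr 1
    rw [hla, hlb, hudef]
    rw [hea', heb']
    have hD : g * (C + S) - g * (C - S) ≠ 0 := by nlinarith [mul_pos hg hS]
    have hS0 : S ≠ 0 := hS.ne'
    field_simp
    linear_combination (x * C + S * Real.log g) * (mul_inv_cancel₀ hS0)
  have hexp2 : Real.exp (u/2) * Real.exp (u/2) = Real.exp u := by
    rw [← Real.exp_add]
    congr 1
    ring
  have he2 : 0 < Real.exp (u/2) := Real.exp_pos _
  refine ⟨?_, ?_, ?_⟩
  · -- G I / L < sqrt (I G)
    rw [hG, hI, hL]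
    have hsq : Real.sqrt (g * Real.exp u * g) = g * Real.exp (u/2) := by
      rw [show g * Real.exp u * g = (g * Real.exp (u/2)) * (g * Real.exp (u/2)) by rw [← hexp2]; ring]
      exact Real.sqrt_mul_self (by positivity)
    rw [hsq]
    have hK1 := K1 x hx
    rw [← hSdef, ← hCdef] at hK1
    have h2 : u / 2 < Real.log (S / x) := by
      rw [Real.log_div hS.ne' hx.ne', hudef]
      linarith
    have hK1x : Real.exp (u/2) < S / x := by
      calc Real.exp (u/2) < Real.exp (Real.log (S/x)) := Real.exp_lt_exp.2 h2
      _ = S / x := Real.exp_log (by positivity)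
    rw [div_lt_iff₀ (by positivity)]
    calc g * (g * Real.exp u) = (g * g * Real.exp (u/2)) * Real.exp (u/2) := by rw [← hexp2]; ring
    _ < (g * g * Real.exp (u/2)) * (S / x) := by
        exact mul_lt_mul_of_pos_left hK1x (by positivity)
    _ = g * Real.exp (u/2) * (g * (S / x)) := by ring
  · -- sqrt (I G) < L I G
    rw [hG, hI, L]
    have hlt : g < g * Real.exp u := by
      have h1 : 1 < Real.exp u := by
        have := Real.add_one_le_exp u
        linarith
      nlinarith [hg, h1]
    exact glb g (g * Real.exp u) hg hlt
  · -- L I G < L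
    rw [hG, hI, hL, L]
    have hlogIG : Real.log (g * Real.exp u) - Real.log g = u := by
      rw [Real.log_mul hg.ne' (Real.exp_pos u).ne', Real.log_exp]
      ring
    rw [hlogIG]
    rw [div_lt_iff₀ hu]
    have hK3 := K3 x hx
    rw [← hSdef, ← hCdef, ← hudef] at hK3
    have h9 : Real.exp u - 1 < C - S / x := by linarith
    have h10 := mul_lt_mul_of_pos_left h9 hg
    have h11 : g * (S / x) * u = g * (C - S / x) := by
      rw [hudef]
      field_simp
    rw [h11]
    linarith [h10]

theorem stmt_8 (a b : ℝ) (ha : 0 < a) (hb : 0 < b) (hab : a ≠ b) :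
    G a b * I a b / L a b < Real.sqrt (I a b * G a b) ∧
    Real.sqrt (I a b * G a b) < L (I a b) (G a b) ∧
    L (I a b) (G a b) < L a b := by
  rcases hab.lt_or_gt with h | h
  · have H := main' b a ha h
    rw [G_symm a b, I_symm a b ha hb, L_symm a b]
    exact H
  · exact main' a b hb h
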